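/- Let p be a prime and 1 ≤ r < p. Then (-1)^r C(p-1,r) ≡ 1 - p Σ_{k=1}^r 1/k + p^2 Σ_{1 ≤ j < k ≤ r} 1/(jk) - p^3 Σ_{1 ≤ i < j < k ≤ r} 1/(ijk) (mod p^4), as a congruence of p-integral rationals. -/

import Mathlib

set_option maxHeartbeats 1000000

private def S1 (r : ℕ) : ℚ := ∑ k ∈ Finset.Icc 1 r, (1 : ℚ) / k
private def S2 (r : ℕ) : ℚ :=
  ∑ k ∈ Finset.Icc 1 r, ∑ j ∈ Finset.Icc 1 (k - 1), (1 : ℚ) / (j * k)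
private def S3 (r : ℕ) : ℚ :=
  ∑ k ∈ Finset.Icc 1 r, ∑ j ∈ Finset.Icc 1 (k - 1),
    ∑ i ∈ Finset.Icc 1 (j - 1), (1 : ℚ) / (i * j * k)

private lemma norm_nat_cast_eq_one (p : ℕ) [hp : Fact p.Prime] {k : ℕ} (h0 : 0 < k)
    (hkp : k < p) : ‖((k : ℚ) : ℚ_[p])‖ = 1 := by
  have h1 : ((k : ℚ) : ℚ_[p]) = ((k : ℤ) : ℚ_[p]) := by push_cast; ring
  rw [h1]
  refine le_antisymm (Padic.norm_int_le_one _) ?_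
  by_contra h
  push_neg at h
  have := (Padic.norm_intCast_lt_one_iff (k := (k : ℤ))).mp h
  have : p ∣ k := by exact_mod_cast this
  exact absurd (Nat.le_of_dvd h0 this) (not_le.mpr hkp)

private lemma norm_inv_le (p : ℕ) [hp : Fact p.Prime] {k : ℕ} (h0 : 0 < k)
    (hkp : k < p) : ‖((1 / (k : ℚ)) : ℚ_[p])‖ ≤ 1 := by
  have : ((1 / (k : ℚ)) : ℚ_[p]) = (((k : ℚ) : ℚ_[p]))⁻¹ := by push_cast; ring
  rw [this, norm_inv, norm_nat_cast_eq_one p h0 hkp]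
  norm_num

private lemma norm_S3_le (p : ℕ) [hp : Fact p.Prime] {r : ℕ} (hrp : r < p) :
    ‖((S3 r : ℚ) : ℚ_[p])‖ ≤ 1 := by
  unfold S3
  push_cast
  refine IsUltrametricDist.norm_sum_le_of_forall_le_of_nonneg zero_le_one fun k hk => ?_
  refine IsUltrametricDist.norm_sum_le_of_forall_le_of_nonneg zero_le_one fun j hj => ?_
  refine IsUltrametricDist.norm_sum_le_of_forall_le_of_nonneg zero_le_one fun i hi => ?_
  simp only [Finset.mem_Icc] at hk hj hi
  have hkp : k < p := lt_of_le_of_lt hk.2 hrp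
  have hjp : j < p := lt_of_lt_of_le (Nat.lt_of_le_of_lt hj.2 (Nat.sub_lt (lt_of_lt_of_le one_pos hk.1) one_pos)) hkp.le
  have hip : i < p := lt_of_lt_of_le (Nat.lt_of_le_of_lt hi.2 (Nat.sub_lt (lt_of_lt_of_le one_pos hj.1) one_pos)) hjp.le
  have : (1 : ℚ_[p]) / (↑i * ↑j * ↑k) = ((1/(i:ℚ) : ℚ) : ℚ_[p]) * ((1/(j:ℚ) : ℚ) : ℚ_[p]) * ((1/(k:ℚ) : ℚ) : ℚ_[p]) := by
    push_cast; ring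
  rw [this, norm_mul, norm_mul]
  have hi' := norm_inv_le p hi.1 hip
  have hj' := norm_inv_le p hj.1 hjp
  have hk' := norm_inv_le p hk.1 hkp
  have h := mul_le_mul (mul_le_mul hi' hj' (norm_nonneg _) zero_le_one) hk' (norm_nonneg _) (by norm_num)
  simpa using h

private lemma S1_succ (r : ℕ) (hr : 1 ≤ r) : S1 (r + 1) = S1 r + 1 / (r + 1 : ℚ) := by
  unfold S1
  rw [Finset.sum_Icc_succ_top (by omega)]
  push_cast; ring

private lemma S2_succ (r : ℕ) (hr : 1 ≤ r) : S2 (r + 1) = S2 r + S1 r / (r + 1 : ℚ) := by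
  unfold S2 S1
  rw [Finset.sum_Icc_succ_top (by omega : 1 ≤ r + 1)]
  congr 1
  rw [Nat.add_sub_cancel, Finset.sum_div]
  refine Finset.sum_congr rfl fun j hj => ?_
  rw [div_div]
  push_cast; ring_nf

private lemma S3_succ (r : ℕ) (hr : 1 ≤ r) : S3 (r + 1) = S3 r + S2 r / (r + 1 : ℚ) := by
  unfold S3 S2
  rw [Finset.sum_Icc_succ_top (by omega : 1 ≤ r + 1)]
  congr 1
  rw [Nat.add_sub_cancel, Finset.sum_div]
  refine Finset.sum_congr rfl fun j hj => ?_
  rw [Finset.sum_div]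
  refine Finset.sum_congr rfl fun i hi => ?_
  rw [div_div]
  push_cast; ring_nf

private lemma A_succ (p : ℕ) [hp : Fact p.Prime] (r : ℕ) (hrp : r + 1 < p) :
    ((-1 : ℚ) ^ (r+1) * ((p - 1).choose (r+1) : ℚ))
      = ((-1 : ℚ) ^ r * ((p - 1).choose r : ℚ)) * (1 - (p : ℚ) / (r + 1)) := by
  have hrec := Nat.choose_succ_right_eq (p - 1) r
  have hcast : (((p - 1) - r : ℕ) : ℚ) = (p : ℚ) - 1 - r := by
    have h1 : r ≤ p - 1 := by omega
    have h2 : 1 ≤ p := hp.out.one_lt.le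
    push_cast [Nat.cast_sub h1, Nat.cast_sub h2]
    ring
  have hq : (((p - 1).choose (r+1) : ℚ)) * ((r : ℚ) + 1) = ((p - 1).choose r : ℚ) * ((p : ℚ) - 1 - r) := by
    have h := congrArg (Nat.cast : ℕ → ℚ) hrec
    push_cast at h
    rw [h, hcast]
  have hr1 : ((r : ℚ) + 1) ≠ 0 := by positivity
  have hC : ((p - 1).choose (r+1) : ℚ) = ((p-1).choose r : ℚ) * ((p:ℚ) - 1 - r) / ((r:ℚ)+1) :=
    eq_div_of_mul_eq hr1 hq
  rw [pow_succ, hC]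
  field_simp
  ring

private lemma key (p : ℕ) [hp : Fact p.Prime] : ∀ r : ℕ, 1 ≤ r → r < p →
    ‖((((-1 : ℚ) ^ r * ((p - 1).choose r : ℚ) - (1 - (p : ℚ) * S1 r + (p:ℚ)^2 * S2 r - (p:ℚ)^3 * S3 r)) : ℚ) : ℚ_[p])‖
      ≤ (p : ℝ) ^ (-(4 : ℤ)) := by
  have hppos : (0 : ℝ) < p := by exact_mod_cast hp.out.pos
  have hbound : (0 : ℝ) ≤ (p : ℝ) ^ (-(4 : ℤ)) := by positivity
  intro r
  induction r with
  | zero => omega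
  | succ r ih =>
    intro _ hrp
    by_cases hr0 : r = 0
    · -- base case r + 1 = 1
      subst hr0
      have hp1 : 1 ≤ p := hp.out.one_lt.le
      have : ((-1 : ℚ) ^ 1 * ((p - 1).choose 1 : ℚ) - (1 - (p : ℚ) * S1 1 + (p:ℚ)^2 * S2 1 - (p:ℚ)^3 * S3 1)) = 0 := by
        have h1 : (p - 1).choose 1 = p - 1 := Nat.choose_one_right _
        have hS1 : S1 1 = 1 := by simp [S1]
        have hS2 : S2 1 = 0 := by simp [S2]
        have hS3 : S3 1 = 0 := by simp [S3]
        rw [h1, hS1, hS2, hS3, Nat.cast_sub hp1]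
        push_cast; ring
      rw [this]
      simpa using hbound
    · -- inductive step, 1 ≤ r
      have hr : 1 ≤ r := by omega
      have hrp' : r < p := by omega
      have IH := ih hr hrp'
      have hr1 : ((r : ℚ) + 1) ≠ 0 := by positivity
      -- algebraic identity
      have hident :
          ((-1 : ℚ) ^ (r+1) * ((p - 1).choose (r+1) : ℚ) - (1 - (p : ℚ) * S1 (r+1) + (p:ℚ)^2 * S2 (r+1) - (p:ℚ)^3 * S3 (r+1)))
          = ((-1 : ℚ) ^ r * ((p - 1).choose r : ℚ) - (1 - (p : ℚ) * S1 r + (p:ℚ)^2 * S2 r - (p:ℚ)^3 * S3 r)) * (1 - (p : ℚ) / (r + 1))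
            + (p : ℚ)^4 * S3 r / (r + 1) := by
        rw [A_succ p r hrp, S1_succ r hr, S2_succ r hr, S3_succ r hr]
        field_simp
        ring
      rw [hident]
      set X : ℚ := ((-1 : ℚ) ^ r * ((p - 1).choose r : ℚ) - (1 - (p : ℚ) * S1 r + (p:ℚ)^2 * S2 r - (p:ℚ)^3 * S3 r)) with hX
      have hcast1 : (((X * (1 - (p : ℚ) / (r + 1)) + (p : ℚ)^4 * S3 r / (r + 1)) : ℚ) : ℚ_[p])
          = ((X : ℚ) : ℚ_[p]) * (((1 - (p : ℚ) / (r + 1)) : ℚ) : ℚ_[p])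
            + ((((p : ℚ)^4 : ℚ) : ℚ_[p])) * ((S3 r : ℚ) : ℚ_[p]) * ((((1 : ℚ)/(r+1 : ℚ)) : ℚ) : ℚ_[p]) := by
        push_cast; ring
      rw [hcast1]
      have hr1Q : ‖((((1 : ℚ)/(r+1 : ℚ)) : ℚ) : ℚ_[p])‖ ≤ 1 := by
        have h := norm_inv_le p (Nat.succ_pos r) hrp (k := r+1)
        have he : ((((1 : ℚ)/(r+1 : ℚ)) : ℚ) : ℚ_[p]) = 1 / (((r+1 : ℕ) : ℚ) : ℚ_[p]) := by push_cast; ring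
        rw [he]; exact h
      refine le_trans (Padic.nonarchimedean _ _) (max_le ?_ ?_)
      · rw [norm_mul]
        have h2 : ‖(((1 - (p : ℚ) / (r + 1)) : ℚ) : ℚ_[p])‖ ≤ 1 := by
          have he : (((1 - (p : ℚ) / (r + 1)) : ℚ) : ℚ_[p])
              = 1 + (-((p : ℚ_[p]) * ((((1 : ℚ)/(r+1 : ℚ)) : ℚ) : ℚ_[p]))) := by push_cast; ring
          rw [he]
          refine le_trans (Padic.nonarchimedean _ _) (max_le (by simp) ?_)
          rw [norm_neg, norm_mul, Padic.norm_p]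
          have h1p : (1:ℝ) ≤ p := by exact_mod_cast hp.out.one_lt.le
          have hpinv : (p:ℝ)⁻¹ ≤ 1 := inv_le_one_of_one_le₀ h1p
          calc (p:ℝ)⁻¹ * ‖((((1 : ℚ)/(r+1 : ℚ)) : ℚ) : ℚ_[p])‖ ≤ 1 * 1 :=
                mul_le_mul hpinv hr1Q (norm_nonneg _) zero_le_one
            _ = 1 := by ring
        calc ‖((X : ℚ) : ℚ_[p])‖ * ‖(((1 - (p : ℚ) / (r + 1)) : ℚ) : ℚ_[p])‖
            ≤ (p : ℝ) ^ (-(4 : ℤ)) * 1 := mul_le_mul IH h2 (norm_nonneg _) hbound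
          _ = (p : ℝ) ^ (-(4 : ℤ)) := by ring
      · rw [norm_mul, norm_mul]
        have hp4 : ‖((((p : ℚ)^4 : ℚ)) : ℚ_[p])‖ = (p : ℝ) ^ (-(4 : ℤ)) := by
          have he : ((((p : ℚ)^4 : ℚ)) : ℚ_[p]) = ((p : ℚ_[p]))^4 := by push_cast; ring
          rw [he, norm_pow, Padic.norm_p, zpow_neg, ← zpow_natCast]
          norm_num
        have hS3 : ‖((S3 r : ℚ) : ℚ_[p])‖ ≤ 1 := norm_S3_le p hrp'
        calc ‖((((p : ℚ)^4 : ℚ)) : ℚ_[p])‖ * ‖((S3 r : ℚ) : ℚ_[p])‖ * ‖((((1 : ℚ)/(r+1 : ℚ)) : ℚ) : ℚ_[p])‖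
            ≤ (p : ℝ) ^ (-(4 : ℤ)) * 1 * 1 := by
              rw [hp4]
              exact mul_le_mul (mul_le_mul le_rfl hS3 (norm_nonneg _) hbound) hr1Q (norm_nonneg _) (by positivity)
          _ = (p : ℝ) ^ (-(4 : ℤ)) := by ring

theorem choose_expansion (p : ℕ) [Fact p.Prime] (r : ℕ) (hr1 : 1 ≤ r) (hrp : r < p) :
    ‖((((-1 : ℚ) ^ r * ((p - 1).choose r : ℚ)
        - (1 - (p : ℚ) * ∑ k ∈ Finset.Icc 1 r, (1 : ℚ) / k
          + (p : ℚ) ^ 2 * ∑ k ∈ Finset.Icc 1 r, ∑ j ∈ Finset.Icc 1 (k - 1), (1 : ℚ) / (j * k)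
          - (p : ℚ) ^ 3 * ∑ k ∈ Finset.Icc 1 r, ∑ j ∈ Finset.Icc 1 (k - 1),
              ∑ i ∈ Finset.Icc 1 (j - 1), (1 : ℚ) / (i * j * k))) : ℚ) : ℚ_[p])‖
      ≤ (p : ℝ) ^ (-(4 : ℤ)) := by
  exact key p r hr1 hrp
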